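/- Fix ξ₀ ∈ ℤ² and v ∈ ℤ². Define û : ℤ² × ℝ → ℂ² by û(0,t) = i·ξ₀, û(ξ,t) = e^{2π(ξ·ξ₀)t} f(ξ) v for ξ in S∖{0} where S = {ξ ∈ ℤ² : ξ·v = 0} and f : S∖{0} → ℂ, and û(ξ,t) = 0 for ξ ∉ S. Then for every ξ ∈ ℤ² and t ∈ ℝ, ∂_t û(ξ,t) = -2πi ∑_{ζ+η=ξ} (û(ζ,t)·η) û(η,t), where the sum runs over pairs (ζ,η) ∈ ℤ²×ℤ² with ζ+η=ξ (only finitely many terms are nonzero). -/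

import Mathlib

/-- The bilinear dot product on `ℂ²`. -/
noncomputable def dotC2 (a b : Fin 2 → ℂ) : ℂ := ∑ i, a i * b i

/-- Coercion of a lattice vector in `ℤ²` to `ℂ²`. -/
def latC2 (x : Fin 2 → ℤ) : Fin 2 → ℂ := fun i => (x i : ℂ)

/-- The 2D complex construction: with `û(0,t) = i ξ₀`, `û(ξ,t) = e^{2π(ξ·ξ₀)t} f(ξ) v`
for `ξ ∈ S∖{0}` (where `S = {ξ : ξ·v = 0}`) and `û(ξ,t) = 0` for `ξ ∉ S`, the Fourier
modes satisfy `∂ₜ û(ξ,t) = -2πi ∑_{ζ+η=ξ} (û(ζ,t)·η) û(η,t)`. -/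
theorem stmt4 (ξ₀ v : Fin 2 → ℤ) (f : (Fin 2 → ℤ) → ℂ)
    (hξ₀S : ∑ i, ξ₀ i * v i = 0)
    (u : (Fin 2 → ℤ) → ℝ → (Fin 2 → ℂ))
    (h0 : ∀ t : ℝ, u 0 t = fun i => Complex.I * (ξ₀ i : ℂ))
    (hS : ∀ ξ : Fin 2 → ℤ, ξ ≠ 0 → (∑ i, ξ i * v i) = 0 → ∀ t : ℝ,
      u ξ t = fun i =>
        (Real.exp (2 * Real.pi * ((∑ j, ξ j * ξ₀ j : ℤ) : ℝ) * t) : ℂ) * f ξ * (v i : ℂ))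
    (hout : ∀ ξ : Fin 2 → ℤ, (∑ i, ξ i * v i) ≠ 0 → ∀ t : ℝ, u ξ t = 0) :
    ∀ (ξ : Fin 2 → ℤ) (t : ℝ),
      HasDerivAt (fun s => u ξ s)
        ((-(2 * (Real.pi : ℂ) * Complex.I)) •
          ∑' ζ : Fin 2 → ℤ, dotC2 (u ζ t) (latC2 (ξ - ζ)) • u (ξ - ζ) t) t := by
  intro ξ t
  have key : (∑' ζ : Fin 2 → ℤ, dotC2 (u ζ t) (latC2 (ξ - ζ)) • u (ξ - ζ) t)
      = (Complex.I * ∑ i, (ξ₀ i : ℂ) * (ξ i : ℂ)) • u ξ t := by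
    rw [tsum_eq_single 0]
    · simp only [sub_zero, h0 t]
      congr 1
      simp only [dotC2, latC2, Fin.sum_univ_two]
      ring
    · intro ζ hζ
      by_cases h1 : (∑ i, ζ i * v i) = 0
      · by_cases h2 : (∑ i, (ξ - ζ) i * v i) = 0
        · rw [hS ζ hζ h1 t]
          have h2' : (∑ i, ((ξ - ζ) i : ℂ) * (v i : ℂ)) = 0 := by
            have := congrArg (Int.cast : ℤ → ℂ) h2
            push_cast at this
            simpa using this
          have hd : dotC2
              (fun i => (Real.exp (2 * Real.pi * ((∑ j, ζ j * ξ₀ j : ℤ) : ℝ) * t) : ℂ)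
                * f ζ * (v i : ℂ)) (latC2 (ξ - ζ)) = 0 := by
            simp only [dotC2, latC2]
            rw [Fin.sum_univ_two] at h2' ⊢
            linear_combination
              ((Real.exp (2 * Real.pi * ((∑ j, ζ j * ξ₀ j : ℤ) : ℝ) * t) : ℂ) * f ζ) * h2'
          rw [hd, zero_smul]
        · rw [hout _ h2 t, smul_zero]
      · rw [hout ζ h1 t]
        simp [dotC2]
  rw [key, smul_smul]
  have hscal : (-(2 * (Real.pi : ℂ) * Complex.I)) * (Complex.I * ∑ i, (ξ₀ i : ℂ) * (ξ i : ℂ))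
      = (2 * Real.pi : ℝ) * (∑ i, (ξ₀ i : ℂ) * (ξ i : ℂ)) := by
    push_cast
    ring_nf
    rw [Complex.I_sq]
    ring
  rw [hscal]
  by_cases hξ0 : ξ = 0
  · subst hξ0
    have : (fun s => u 0 s) = fun _ => (fun i => Complex.I * (ξ₀ i : ℂ)) := funext h0
    rw [this]
    have : ((2 * Real.pi : ℝ) : ℂ) * (∑ i, (ξ₀ i : ℂ) * ((0 : Fin 2 → ℤ) i : ℂ)) = 0 := by
      simp
    rw [this, zero_smul]
    exact hasDerivAt_const t _
  · by_cases h1 : (∑ i, ξ i * v i) = 0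
    · set c : ℝ := ((∑ j, ξ j * ξ₀ j : ℤ) : ℝ) with hc
      have hfun : (fun s => u ξ s) = fun s =>
          (fun i => (Real.exp (2 * Real.pi * c * s) : ℂ) * f ξ * (v i : ℂ)) :=
        funext (hS ξ hξ0 h1)
      rw [hfun, hS ξ hξ0 h1 t]
      rw [hasDerivAt_pi]
      intro i
      have hlin : HasDerivAt (fun s : ℝ => 2 * Real.pi * c * s) (2 * Real.pi * c) t := by
        simpa using (hasDerivAt_id t).const_mul (2 * Real.pi * c)
      have hexp := hlin.exp
      have hC := hexp.ofReal_comp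
      have hder := hC.mul_const (f ξ * (v i : ℂ))
      convert hder using 1
      · rfl
      · funext s
        simp [mul_assoc]
      · simp only [Pi.smul_apply, smul_eq_mul, hc]
        push_cast
        simp only [Fin.sum_univ_two]
        ring
    · have hfun : (fun s => u ξ s) = fun _ => (0 : Fin 2 → ℂ) := funext (hout ξ h1)
      rw [hfun, hout ξ h1 t, smul_zero]
      exact hasDerivAt_const t _
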